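/- Monge-type monotonicity of leftmost optimal crossing points: for all lists A1, A2, B over a type with decidable equality and all indices j1 ≤ j2 ≤ B.length, the leftmost optimal crossing points satisfy θ(j1) ≤ θ(j2). That is, for a fixed source, the leftmost point of the common boundary through which some shortest path to the sink passes moves monotonically to the right as the sink moves to the right. -/

import Mathlib

/-- Costs of the edit operations (formerly Mathlib's `Levenshtein.Cost`). -/
structure Levenshtein.Cost (α β δ : Type*) where
  delete : α → δ
  insert : β → δ
  substitute : α → β → δ

/-- Unit costs (formerly Mathlib's `Levenshtein.defaultCost`). -/
def Levenshtein.defaultCost {α : Type*} [DecidableEq α] : Levenshtein.Cost α α ℕ where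
  delete _ := 1
  insert _ := 1
  substitute a b := if a = b then 0 else 1

/-- Levenshtein distance (formerly in Mathlib), given by its defining recurrence. -/
def levenshtein {α β δ : Type*} [AddZeroClass δ] [Min δ] (C : Levenshtein.Cost α β δ) :
    List α → List β → δ
  | [], [] => 0
  | [], y :: ys => C.insert y + levenshtein C [] ys
  | x :: xs, [] => C.delete x + levenshtein C xs []
  | x :: xs, y :: ys =>
    min (C.delete x + levenshtein C xs (y :: ys))
      (min (C.insert y + levenshtein C (x :: xs) ys) (C.substitute x y + levenshtein C xs ys))

section LevenshteinLemmas

variable {α β δ : Type*} [AddZeroClass δ] [Min δ]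

@[simp]
theorem levenshtein_nil_nil (C : Levenshtein.Cost α β δ) : levenshtein C [] [] = 0 := by
  rw [levenshtein]

@[simp]
theorem levenshtein_nil_cons (C : Levenshtein.Cost α β δ) (y : β) (ys : List β) :
    levenshtein C [] (y :: ys) = C.insert y + levenshtein C [] ys := by
  rw [levenshtein]

@[simp]
theorem levenshtein_cons_nil (C : Levenshtein.Cost α β δ) (x : α) (xs : List α) :
    levenshtein C (x :: xs) [] = C.delete x + levenshtein C xs [] := by
  rw [levenshtein]

theorem levenshtein_cons_cons (C : Levenshtein.Cost α β δ) (x : α) (xs : List α) (y : β)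
    (ys : List β) :
    levenshtein C (x :: xs) (y :: ys) =
      min (C.delete x + levenshtein C xs (y :: ys))
        (min (C.insert y + levenshtein C (x :: xs) ys) (C.substitute x y + levenshtein C xs ys)) := by
  rw [levenshtein]

end LevenshteinLemmas

@[simp]
theorem Levenshtein.defaultCost_delete {α : Type*} [DecidableEq α] (a : α) :
    (Levenshtein.defaultCost : Levenshtein.Cost α α ℕ).delete a = 1 := rfl

@[simp]
theorem Levenshtein.defaultCost_insert {α : Type*} [DecidableEq α] (a : α) :
    (Levenshtein.defaultCost : Levenshtein.Cost α α ℕ).insert a = 1 := rfl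

@[simp]
theorem Levenshtein.defaultCost_substitute {α : Type*} [DecidableEq α] (a b : α) :
    (Levenshtein.defaultCost : Levenshtein.Cost α α ℕ).substitute a b = if a = b then 0 else 1 :=
  rfl

/-- The unit-cost Levenshtein edit distance. -/
def editDist {α : Type*} [DecidableEq α] (A B : List α) : ℕ :=
  levenshtein Levenshtein.defaultCost A B

/-- `cost_j(y) = d(A₁, B.take y) + d(A₂, (B.take j).drop y)`: the length of a shortest
source-to-`u_j` path through the boundary point `w_y`. -/
def splitCost {α : Type*} [DecidableEq α] (A₁ A₂ B : List α) (j y : ℕ) : ℕ :=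
  editDist A₁ (B.take y) + editDist A₂ ((B.take j).drop y)

section EditDistLemmas

variable {α : Type*} [DecidableEq α]

theorem editDist_nil_left (Y : List α) : editDist [] Y = Y.length := by
  induction Y with
  | nil => simp [editDist]
  | cons y ys ih => simp [editDist, levenshtein_nil_cons] at ih ⊢; omega

theorem editDist_nil_right (X : List α) : editDist X [] = X.length := by
  induction X with
  | nil => simp [editDist]
  | cons x xs ih => simp [editDist] at ih ⊢; omega

theorem editDist_cons_cons (a b : α) (X Y : List α) :
    editDist (a :: X) (b :: Y) =
      min (1 + editDist X (b :: Y))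
        (min (1 + editDist (a :: X) Y) ((if a = b then 0 else 1) + editDist X Y)) := by
  simp [editDist, levenshtein_cons_cons]

theorem editDist_del_le (a : α) (X Y : List α) : editDist (a :: X) Y ≤ 1 + editDist X Y := by
  cases Y with
  | nil => simp [editDist_nil_right]
  | cons y ys => rw [editDist_cons_cons]; exact min_le_left _ _

theorem editDist_ins_le (b : α) (X Y : List α) : editDist X (b :: Y) ≤ 1 + editDist X Y := by
  cases X with
  | nil => simp [editDist_nil_left]
  | cons x xs => rw [editDist_cons_cons]; exact le_trans (min_le_right _ _) (min_le_left _ _)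

theorem editDist_sub_le (a b : α) (X Y : List α) :
    editDist (a :: X) (b :: Y) ≤ (if a = b then 0 else 1) + editDist X Y := by
  rw [editDist_cons_cons]; exact le_trans (min_le_right _ _) (min_le_right _ _)

theorem editDist_comm (X Y : List α) : editDist X Y = editDist Y X := by
  induction X generalizing Y with
  | nil => simp [editDist_nil_left, editDist_nil_right]
  | cons x xs ih =>
    induction Y with
    | nil => simp [editDist_nil_left, editDist_nil_right]
    | cons y ys ih2 =>
      rw [editDist_cons_cons, editDist_cons_cons, ih ys, ih (y :: ys), ih2]
      rw [min_left_comm]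
      congr 2
      simp [eq_comm]

theorem editDist_le_length_add (X P Q : List α) :
    editDist X (P ++ Q) ≤ P.length + editDist X Q := by
  induction P with
  | nil => simp
  | cons p P' ih =>
    calc editDist X (p :: (P' ++ Q)) ≤ 1 + editDist X (P' ++ Q) := editDist_ins_le _ _ _
    _ ≤ 1 + (P'.length + editDist X Q) := by omega
    _ = _ := by simp; omega

theorem editDist_length_add_left (U V Q : List α) :
    editDist (U ++ V) Q ≤ U.length + editDist V Q := by
  induction U with
  | nil => simp
  | cons u U' ih =>
    calc editDist (u :: (U' ++ V)) Q ≤ 1 + editDist (U' ++ V) Q := editDist_del_le _ _ _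
    _ ≤ 1 + (U'.length + editDist V Q) := by omega
    _ = _ := by simp; omega

theorem editDist_append_append_le_aux (n : ℕ) : ∀ (U P : List α), U.length + P.length ≤ n →
    ∀ (V Q : List α), editDist (U ++ V) (P ++ Q) ≤ editDist U P + editDist V Q := by
  induction n with
  | zero =>
    intro U P h V Q
    obtain ⟨rfl, rfl⟩ : U = [] ∧ P = [] := by
      constructor <;> (apply List.eq_nil_of_length_eq_zero; omega)
    simp
  | succ n ih =>
    intro U P h V Q
    match U, P with
    | [], P => simpa [editDist_nil_left] using editDist_le_length_add V P Q
    | U, [] => simpa [editDist_nil_right] using editDist_length_add_left U V Q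
    | u :: U', p :: P' =>
      have h1 := ih U' (p :: P') (by simp at h ⊢; omega) V Q
      have h2 := ih (u :: U') P' (by simp at h ⊢; omega) V Q
      have h3 := ih U' P' (by simp at h ⊢; omega) V Q
      have d1 := editDist_del_le u (U' ++ V) ((p :: P') ++ Q)
      have d2 := editDist_ins_le p ((u :: U') ++ V) (P' ++ Q)
      have d3 := editDist_sub_le u p (U' ++ V) (P' ++ Q)
      rw [editDist_cons_cons u p U' P']
      simp only [List.cons_append] at *
      rcases min_choice (1 + editDist U' (p :: P'))
        ((1 + editDist (u :: U') P') ⊓ ((if u = p then 0 else 1) + editDist U' P')) with hm | hm <;>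
        rw [hm]
      · omega
      · rcases min_choice (1 + editDist (u :: U') P')
          ((if u = p then 0 else 1) + editDist U' P') with hm2 | hm2 <;> rw [hm2] <;> omega

theorem editDist_append_append_le (U V P Q : List α) :
    editDist (U ++ V) (P ++ Q) ≤ editDist U P + editDist V Q :=
  editDist_append_append_le_aux (U.length + P.length) U P le_rfl V Q

theorem editDist_split_aux (n : ℕ) : ∀ (A P : List α), A.length + P.length ≤ n →
    ∀ (Q : List α), ∃ U V : List α, A = U ++ V ∧
      editDist U P + editDist V Q ≤ editDist A (P ++ Q) := by
  induction n with
  | zero =>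
    intro A P h Q
    obtain ⟨rfl, rfl⟩ : A = [] ∧ P = [] := by
      constructor <;> (apply List.eq_nil_of_length_eq_zero; omega)
    exact ⟨[], [], rfl, by simp [editDist_nil_left, editDist_nil_right]⟩
  | succ n ih =>
    intro A P h Q
    match A, P with
    | A, [] =>
      refine ⟨[], A, rfl, ?_⟩
      simp [editDist_nil_left, editDist_nil_right]
    | [], p :: P' =>
      refine ⟨[], [], rfl, ?_⟩
      simp [editDist_nil_left, editDist_nil_right]
      omega
    | a :: A', p :: P' =>
      have hmin : editDist (a :: A') ((p :: P') ++ Q) = 1 + editDist A' ((p :: P') ++ Q)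
          ∨ editDist (a :: A') ((p :: P') ++ Q) = 1 + editDist (a :: A') (P' ++ Q)
          ∨ editDist (a :: A') ((p :: P') ++ Q)
              = (if a = p then 0 else 1) + editDist A' (P' ++ Q) := by
        simp only [List.cons_append]
        rw [editDist_cons_cons]
        rcases min_choice (1 + editDist A' (p :: (P' ++ Q)))
          ((1 + editDist (a :: A') (P' ++ Q)) ⊓ ((if a = p then 0 else 1) + editDist A' (P' ++ Q))) with h1 | h1 <;>
          rw [h1]
        · left; rfl
        · rcases min_choice (1 + editDist (a :: A') (P' ++ Q))
            ((if a = p then 0 else 1) + editDist A' (P' ++ Q)) with h2 | h2 <;> rw [h2]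
          · right; left; rfl
          · right; right; rfl
      rcases hmin with h1 | h1 | h1
      · obtain ⟨U', V', rfl, hle⟩ := ih A' (p :: P') (by simp at h ⊢; omega) Q
        refine ⟨a :: U', V', rfl, ?_⟩
        have := editDist_del_le a U' (p :: P')
        simp only [List.cons_append] at h1 hle this ⊢
        omega
      · obtain ⟨U, V, hUV, hle⟩ := ih (a :: A') P' (by simp at h ⊢; omega) Q
        refine ⟨U, V, hUV, ?_⟩
        have := editDist_ins_le p U P'
        simp only [List.cons_append] at h1 hle this ⊢
        omega
      · obtain ⟨U', V', rfl, hle⟩ := ih A' P' (by simp at h ⊢; omega) Q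
        refine ⟨a :: U', V', rfl, ?_⟩
        have := editDist_sub_le a p U' P'
        simp only [List.cons_append] at h1 hle this ⊢
        omega

theorem editDist_split (A P Q : List α) : ∃ U V : List α, A = U ++ V ∧
    editDist A (P ++ Q) = editDist U P + editDist V Q := by
  obtain ⟨U, V, rfl, hle⟩ := editDist_split_aux (A.length + P.length) A P le_rfl Q
  exact ⟨U, V, rfl, le_antisymm (editDist_append_append_le U V P Q) hle⟩

theorem editDist_quadrangle_aux (n : ℕ) : ∀ (A P Q R : List α),
    A.length + P.length + Q.length + R.length ≤ n →
    editDist A (P ++ Q) + editDist A (Q ++ R) ≤ editDist A (P ++ (Q ++ R)) + editDist A Q := by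
  induction n with
  | zero =>
    intro A P Q R h
    obtain ⟨rfl, rfl⟩ : P = [] ∧ R = [] := by
      constructor <;> (apply List.eq_nil_of_length_eq_zero; omega)
    simp
  | succ n ih =>
    intro A P Q R h
    by_cases hPR : P = [] ∧ R = []
    · obtain ⟨rfl, rfl⟩ := hPR
      simp
    · have hlen : 1 ≤ P.length + R.length := by
        rcases (not_and_or.mp hPR) with hP | hR
        · have := List.length_pos_iff.mpr hP; omega
        · have := List.length_pos_iff.mpr hR; omega
      obtain ⟨U, W, rfl, hsplit1⟩ := editDist_split A P (Q ++ R)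
      obtain ⟨V, Z, rfl, hsplit2⟩ := editDist_split W Q R
      have b1 : editDist (U ++ (V ++ Z)) (P ++ Q) ≤ editDist U P + editDist (V ++ Z) Q :=
        editDist_append_append_le U (V ++ Z) P Q
      have b2 : editDist (U ++ (V ++ Z)) (Q ++ R) ≤ editDist (U ++ V) Q + editDist Z R := by
        have := editDist_append_append_le (U ++ V) Z Q R
        rwa [List.append_assoc] at this
      have ihQ := ih Q U V Z (by simp [List.length_append] at h ⊢; omega)
      rw [editDist_comm Q (U ++ V), editDist_comm Q (V ++ Z),
        editDist_comm Q (U ++ (V ++ Z)), editDist_comm Q V] at ihQ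
      omega

theorem editDist_quadrangle (A P Q R : List α) :
    editDist A (P ++ Q) + editDist A (Q ++ R) ≤ editDist A (P ++ (Q ++ R)) + editDist A Q :=
  editDist_quadrangle_aux (A.length + P.length + Q.length + R.length) A P Q R le_rfl

theorem seg_append (B : List α) {y y' j : ℕ} (h1 : y ≤ y') (h2 : y' ≤ j) (h3 : j ≤ B.length) :
    (B.take j).drop y = (B.take y').drop y ++ (B.take j).drop y' := by
  have ht : B.take y' = (B.take j).take y' := by rw [List.take_take, min_eq_left h2]
  rw [ht]
  conv_lhs => rw [← List.take_append_drop y' (B.take j)]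
  rw [List.drop_append_of_le_length]
  simp only [List.length_take]
  omega

end EditDistLemmas

/-- Monge-type monotonicity of leftmost optimal crossing points: if `θ j` is the least
minimizer of `cost_j` over `[0, j]`, then `θ(j₁) ≤ θ(j₂)` whenever `j₁ ≤ j₂ ≤ |B|`. -/
theorem leftmost_crossing_monotone {α : Type*} [DecidableEq α] (A₁ A₂ B : List α)
    (j₁ j₂ : ℕ) (hj : j₁ ≤ j₂) (hj₂ : j₂ ≤ B.length) (θ₁ θ₂ : ℕ)
    (h₁ : IsLeast {y | y ≤ j₁ ∧ ∀ z ≤ j₁, splitCost A₁ A₂ B j₁ y ≤ splitCost A₁ A₂ B j₁ z} θ₁)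
    (h₂ : IsLeast {y | y ≤ j₂ ∧ ∀ z ≤ j₂, splitCost A₁ A₂ B j₂ y ≤ splitCost A₁ A₂ B j₂ z} θ₂) :
    θ₁ ≤ θ₂ := by
  by_contra hcon
  have hy : θ₂ < θ₁ := lt_of_not_ge hcon
  obtain ⟨⟨hθ₁j, hmin₁⟩, hleast₁⟩ := h₁
  obtain ⟨⟨hθ₂j, hmin₂⟩, hleast₂⟩ := h₂
  set P := (B.take θ₁).drop θ₂ with hP
  set Q := (B.take j₁).drop θ₁ with hQ
  set R := (B.take j₂).drop j₁ with hR
  have e1 : (B.take j₁).drop θ₂ = P ++ Q :=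
    seg_append B (le_of_lt hy) hθ₁j (le_trans hj hj₂)
  have e2 : (B.take j₂).drop θ₁ = Q ++ R := by
    rw [hQ, hR]
    exact seg_append B hθ₁j hj hj₂
  have e3 : (B.take j₂).drop θ₂ = P ++ (Q ++ R) := by
    rw [← e2, hP]
    exact seg_append B (le_of_lt hy) (le_trans hθ₁j hj) hj₂
  have quad := editDist_quadrangle A₂ P Q R
  have hc2 := hmin₂ θ₁ (le_trans hθ₁j hj)
  have key : splitCost A₁ A₂ B j₁ θ₂ ≤ splitCost A₁ A₂ B j₁ θ₁ := by
    simp only [splitCost, e1, e2, e3, ← hQ] at hc2 ⊢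
    omega
  have hmem : θ₂ ∈ {y | y ≤ j₁ ∧ ∀ z ≤ j₁, splitCost A₁ A₂ B j₁ y ≤ splitCost A₁ A₂ B j₁ z} :=
    ⟨le_of_lt (lt_of_lt_of_le hy hθ₁j), fun z hz => le_trans key (hmin₁ z hz)⟩
  exact absurd (hleast₁ hmem) (not_le.mpr hy)
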